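/- Let 0 < ε < 1 and let u = (u_0, …, u_m), v = (v_0, …, v_m), w = (w_0, …, w_m) be finite sequences of real numbers with u_i ≥ 0 for all i, satisfying: (1) (1-ε/8)·u_i ≤ v_i ≤ (1+ε/8)·u_i for every 0 ≤ i ≤ m; and (2) w_0 = v_0, and for every 1 ≤ i ≤ m, if (1-ε/2)·v_i ≤ w_{i-1} ≤ (1+ε/2)·v_i then w_i = w_{i-1}, and otherwise w_i = v_i. Let k - 1 be the number of indices i ∈ {1, …, m} with w_i ≠ w_{i-1}. Then there exist indices 0 = i_1 < i_2 < … < i_k ≤ m such that u_{i_{j-1}} ∉ [(1-ε/8)·u_{i_j}, (1+ε/8)·u_{i_j}] for every j = 2, …, k; in particular, the 0-flip number of w̄ is at most the (ε/8)-flip number of ū. -/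

import Mathlib

private lemma flip_arith {ε x y p q : ℝ} (hε0 : 0 < ε) (hε1 : ε < 1) (hx : 0 ≤ x) (hy : 0 ≤ y)
    (hp1 : (1 - ε / 8) * x ≤ p) (hp2 : p ≤ (1 + ε / 8) * x)
    (hq1 : (1 - ε / 8) * y ≤ q) (hq2 : q ≤ (1 + ε / 8) * y)
    (h : ¬((1 - ε / 2) * q ≤ p ∧ p ≤ (1 + ε / 2) * q)) :
    ¬((1 - ε / 8) * y ≤ x ∧ x ≤ (1 + ε / 8) * y) := by
  rintro ⟨h1, h2⟩
  rw [not_and_or, not_le, not_le] at h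
  rcases h with h | h
  · have A : (1 - ε / 8) * ((1 - ε / 8) * y) ≤ (1 - ε / 8) * x :=
      mul_le_mul_of_nonneg_left h1 (by linarith)
    have B : (1 - ε / 2) * q ≤ (1 - ε / 2) * ((1 + ε / 8) * y) :=
      mul_le_mul_of_nonneg_left hq2 (by linarith)
    nlinarith [mul_nonneg hε0.le hy, mul_nonneg (mul_nonneg hε0.le hε0.le) hy,
      mul_nonneg (mul_nonneg (by linarith : (0:ℝ) ≤ 1 - ε) hε0.le) hy]
  · have A : (1 + ε / 8) * x ≤ (1 + ε / 8) * ((1 + ε / 8) * y) :=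
      mul_le_mul_of_nonneg_left h2 (by linarith)
    have B : (1 + ε / 2) * ((1 - ε / 8) * y) ≤ (1 + ε / 2) * q :=
      mul_le_mul_of_nonneg_left hq1 (by linarith)
    nlinarith [mul_nonneg hε0.le hy, mul_nonneg (mul_nonneg hε0.le hε0.le) hy,
      mul_nonneg (mul_nonneg (by linarith : (0:ℝ) ≤ 1 - ε) hε0.le) hy]

private lemma flip_aux (ε : ℝ) (u v w : ℕ → ℝ) (hε0 : 0 < ε) (hε1 : ε < 1) :
    ∀ m : ℕ, (∀ i ≤ m, 0 ≤ u i) →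
    (∀ i ≤ m, (1 - ε / 8) * u i ≤ v i ∧ v i ≤ (1 + ε / 8) * u i) →
    w 0 = v 0 →
    (∀ i, 1 ≤ i → i ≤ m →
      ((((1 - ε / 2) * v i ≤ w (i - 1) ∧ w (i - 1) ≤ (1 + ε / 2) * v i) → w i = w (i - 1)) ∧
       (¬((1 - ε / 2) * v i ≤ w (i - 1) ∧ w (i - 1) ≤ (1 + ε / 2) * v i) → w i = v i))) →
    ∃ l : List ℕ, ∃ a : ℕ,
      l.length = ((Finset.Icc 1 m).filter (fun i => w i ≠ w (i - 1))).card + 1 ∧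
      l.head? = some 0 ∧
      l.Chain' (· < ·) ∧
      (∀ x ∈ l, x ≤ m) ∧
      l.Chain' (fun a b => ¬((1 - ε / 8) * u b ≤ u a ∧ u a ≤ (1 + ε / 8) * u b)) ∧
      l.getLast? = some a ∧ w a = v a ∧ (∀ j ≤ m, a ≤ j → w j = w a) := by
  intro m
  induction m with
  | zero =>
    intro hu hv hw0 hw
    refine ⟨[0], 0, ?_, rfl, ?_, ?_, ?_, rfl, hw0, ?_⟩
    · simp
    · exact List.isChain_singleton _
    · simp
    · exact List.isChain_singleton _
    · intro j hj _; interval_cases j; rfl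
  | succ m ih =>
    intro hu hv hw0 hw
    obtain ⟨l, a, hlen, hhead, hchain, hle, hflipchain, hlast, hwa, hconst⟩ :=
      ih (fun i hi => hu i (by omega)) (fun i hi => hv i (by omega)) hw0
        (fun i h1 h2 => hw i h1 (by omega))
    have ham : a ≤ m := hle a (List.mem_of_mem_getLast? (by rw [hlast]; rfl))
    have hIcc : Finset.Icc 1 (m + 1) = insert (m + 1) (Finset.Icc 1 m) := by
      ext x; simp [Finset.mem_Icc]; omega
    have hnotmem : (m + 1) ∉ Finset.Icc 1 m := by simp
    by_cases hflip : w (m + 1) = w m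
    · refine ⟨l, a, ?_, hhead, hchain, fun x hx => (hle x hx).trans (by omega), hflipchain,
        hlast, hwa, ?_⟩
      · rw [hIcc, Finset.filter_insert, if_neg (by simpa using hflip)]
        exact hlen
      · intro j hj haj
        rcases Nat.lt_or_ge j (m + 1) with h | h
        · exact hconst j (by omega) haj
        · have : j = m + 1 := by omega
          subst this
          exact hflip.trans (hconst m le_rfl ham)
    · have hwm : w m = w a := hconst m le_rfl ham
      have hsucc := hw (m + 1) (by omega) le_rfl
      simp only [Nat.add_sub_cancel] at hsucc
      have hC : ¬((1 - ε / 2) * v (m + 1) ≤ w m ∧ w m ≤ (1 + ε / 2) * v (m + 1)) := by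
        intro hC; exact hflip (hsucc.1 hC)
      have hwv : w (m + 1) = v (m + 1) := hsucc.2 hC
      have hCa : ¬((1 - ε / 2) * v (m + 1) ≤ v a ∧ v a ≤ (1 + ε / 2) * v (m + 1)) := by
        rw [← hwa, ← hwm]; exact hC
      have hflipab : ¬((1 - ε / 8) * u (m + 1) ≤ u a ∧ u a ≤ (1 + ε / 8) * u (m + 1)) :=
        flip_arith hε0 hε1 (hu a (by omega)) (hu (m + 1) le_rfl)
          (hv a (by omega)).1 (hv a (by omega)).2
          (hv (m + 1) le_rfl).1 (hv (m + 1) le_rfl).2 hCa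
      refine ⟨l ++ [m + 1], m + 1, ?_, ?_, ?_, ?_, ?_, List.getLast?_concat, hwv, ?_⟩
      · rw [hIcc, Finset.filter_insert, if_pos (by simpa using hflip),
          Finset.card_insert_of_notMem (fun h => hnotmem (Finset.mem_of_mem_filter _ h))]
        simp [hlen]
      · rw [List.head?_append, hhead]; rfl
      · unfold List.Chain'; rw [List.isChain_append]
        refine ⟨hchain, List.isChain_singleton _, ?_⟩
        intro x hx y hy
        rw [hlast] at hx
        simp at hx hy
        subst hx; subst hy
        omega
      · intro x hx
        rcases List.mem_append.1 hx with h | h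
        · exact (hle x h).trans (by omega)
        · simp at h; omega
      · unfold List.Chain'; rw [List.isChain_append]
        refine ⟨hflipchain, List.isChain_singleton _, ?_⟩
        intro x hx y hy
        rw [hlast] at hx
        simp at hx hy
        subst hx; subst hy
        exact hflipab
      · intro j hj hj'
        have : j = m + 1 := by omega
        subst this; rfl

theorem stmt_1 (m : ℕ) (ε : ℝ) (u v w : ℕ → ℝ)
    (hε0 : 0 < ε) (hε1 : ε < 1)
    (hu : ∀ i ≤ m, 0 ≤ u i)
    (hv : ∀ i ≤ m, (1 - ε / 8) * u i ≤ v i ∧ v i ≤ (1 + ε / 8) * u i)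
    (hw0 : w 0 = v 0)
    (hw : ∀ i, 1 ≤ i → i ≤ m →
      ((((1 - ε / 2) * v i ≤ w (i - 1) ∧ w (i - 1) ≤ (1 + ε / 2) * v i) → w i = w (i - 1)) ∧
       (¬((1 - ε / 2) * v i ≤ w (i - 1) ∧ w (i - 1) ≤ (1 + ε / 2) * v i) → w i = v i))) :
    ∃ l : List ℕ,
      l.length = ((Finset.Icc 1 m).filter (fun i => w i ≠ w (i - 1))).card + 1 ∧
      l.head? = some 0 ∧
      l.Chain' (· < ·) ∧
      (∀ x ∈ l, x ≤ m) ∧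
      l.Chain' (fun a b => ¬((1 - ε / 8) * u b ≤ u a ∧ u a ≤ (1 + ε / 8) * u b)) := by
  obtain ⟨l, a, h1, h2, h3, h4, h5, _⟩ := flip_aux ε u v w hε0 hε1 m hu hv hw0 hw
  exact ⟨l, h1, h2, h3, h4, h5⟩
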